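/- Every compact quasi-metric space (X,d) is a UC space: every forward continuous function f:(X,d)→(ℝ,|·|) is uniformly continuous. -/
import Mathlib


open Filter Topology Set

structure IsQuasiMetric {X : Type*} (d : X → X → ℝ) : Prop where
  nonneg : ∀ x y, 0 ≤ d x y
  refl : ∀ x, d x x = 0
  eq_of_both_zero : ∀ x y, d x y = 0 → d y x = 0 → x = y
  triangle : ∀ x y z, d x y ≤ d x z + d z y

/-- The forward topology generated by forward balls `B⁺(x,ε) = {y | d x y < ε}`. -/
def forwardTopology {X : Type*} (d : X → X → ℝ) : TopologicalSpace X :=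
  TopologicalSpace.generateFrom {S | ∃ x : X, ∃ ε : ℝ, 0 < ε ∧ S = {y | d x y < ε}}

/-- `s` forward converges to `x`: `d x (s n) → 0`. -/
def ForwardConv {X : Type*} (d : X → X → ℝ) (s : ℕ → X) (x : X) : Prop :=
  ∀ ε > (0:ℝ), ∃ N : ℕ, ∀ n ≥ N, d x (s n) < ε

/-- `s` backward converges to `x`: `d (s n) x → 0`. -/
def BackwardConv {X : Type*} (d : X → X → ℝ) (s : ℕ → X) (x : X) : Prop :=
  ∀ ε > (0:ℝ), ∃ N : ℕ, ∀ n ≥ N, d (s n) x < ε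

/-- `x` is a cluster point of `s`: some subsequence forward converges to `x`. -/
def IsClusterPointOf {X : Type*} (d : X → X → ℝ) (s : ℕ → X) (x : X) : Prop :=
  ∃ φ : ℕ → ℕ, StrictMono φ ∧ ForwardConv d (s ∘ φ) x

def LeftKCauchy {X : Type*} (d : X → X → ℝ) (s : ℕ → X) : Prop :=
  ∀ ε > (0:ℝ), ∃ n₀ : ℕ, ∀ k n : ℕ, n₀ ≤ k → k ≤ n → d (s k) (s n) < ε

/-- `s` is forward parallel to `t`. -/
def ForwardParallel {X : Type*} (d : X → X → ℝ) (s t : ℕ → X) : Prop :=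
  ∀ ε > (0:ℝ), ∃ N : ℕ, ∀ n ≥ N, d (s n) (t n) < ε

/-- Forward continuity for real-valued functions (ε-δ form). -/
def ForwardContinuous {X : Type*} (d : X → X → ℝ) (f : X → ℝ) : Prop :=
  ∀ x₀ : X, ∀ ε > (0:ℝ), ∃ δ > (0:ℝ), ∀ y, d x₀ y < δ → |f x₀ - f y| < ε

/-- Uniform continuity for real-valued functions. -/
def UniformlyCont {X : Type*} (d : X → X → ℝ) (f : X → ℝ) : Prop :=
  ∀ ε > (0:ℝ), ∃ δ > (0:ℝ), ∀ x y, d x y < δ → |f x - f y| < ε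

/-- `(X,d)` is a UC quasi-metric space. -/
def IsUC {X : Type*} (d : X → X → ℝ) : Prop :=
  ∀ f : X → ℝ, ForwardContinuous d f → UniformlyCont d f

/-- Distance between two sets: `inf {d a b | a ∈ A, b ∈ B}`. -/
noncomputable def setDist {X : Type*} (d : X → X → ℝ) (A B : Set X) : ℝ :=
  sInf {r : ℝ | ∃ a ∈ A, ∃ b ∈ B, d a b = r}

/-- every compact quasi-metric space is a UC space. -/
theorem compact_isUC {X : Type*} (d : X → X → ℝ) (hd : IsQuasiMetric d)
    (hcpt : @CompactSpace X (forwardTopology d))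
    (f : X → ℝ) (hf : @Continuous X ℝ (forwardTopology d) _ f) :
    UniformlyCont d f := by
  classical
  letI : TopologicalSpace X := forwardTopology d
  -- Every open set contains a forward ball around each of its points.
  have hball : ∀ U : Set X, IsOpen U → ∀ x ∈ U, ∃ δ > (0:ℝ), ∀ y, d x y < δ → y ∈ U := by
    intro U hU
    have hU' : TopologicalSpace.GenerateOpen
        {S | ∃ x : X, ∃ ε : ℝ, 0 < ε ∧ S = {y | d x y < ε}} U := hU
    clear hU
    induction hU' with
    | basic S hS =>
      obtain ⟨a, ε, hε, rfl⟩ := hS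
      intro x hx
      simp only [Set.mem_setOf_eq] at hx
      refine ⟨ε - d a x, by linarith, fun y hy => ?_⟩
      have := hd.triangle a y x
      simp only [Set.mem_setOf_eq]
      linarith
    | univ => exact fun x _ => ⟨1, one_pos, fun y _ => trivial⟩
    | inter U V hU hV ihU ihV =>
      intro x hx
      obtain ⟨δ₁, h₁, H₁⟩ := ihU x hx.1
      obtain ⟨δ₂, h₂, H₂⟩ := ihV x hx.2
      exact ⟨min δ₁ δ₂, lt_min h₁ h₂, fun y hy =>
        ⟨H₁ y (hy.trans_le (min_le_left _ _)), H₂ y (hy.trans_le (min_le_right _ _))⟩⟩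
    | sUnion S hS ih =>
      intro x hx
      obtain ⟨U, hUS, hxU⟩ := hx
      obtain ⟨δ, hδ, H⟩ := ih U hUS x hxU
      exact ⟨δ, hδ, fun y hy => ⟨U, hUS, H y hy⟩⟩
  intro ε hε
  -- for each x pick δ x from continuity with ε/2
  have key : ∀ x : X, ∃ δ > (0:ℝ), ∀ y, d x y < δ → |f x - f y| < ε / 2 := by
    intro x
    have hopen : IsOpen (f ⁻¹' Metric.ball (f x) (ε / 2)) :=
      hf.isOpen_preimage _ Metric.isOpen_ball
    have hx : x ∈ f ⁻¹' Metric.ball (f x) (ε / 2) := by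
      simp [Metric.mem_ball, hε]
    obtain ⟨δ, hδ, H⟩ := hball _ hopen x hx
    refine ⟨δ, hδ, fun y hy => ?_⟩
    have := H y hy
    simp only [Set.mem_preimage, Metric.mem_ball, Real.dist_eq] at this
    rw [abs_sub_comm]
    exact this
  choose δ hδpos hδ using key
  -- compactness: cover by half-balls
  have hcov : (Set.univ : Set X) ⊆ ⋃ x : X, {y | d x y < δ x / 2} := by
    intro z _
    exact Set.mem_iUnion.2 ⟨z, by simp [hd.refl z, half_pos (hδpos z)]⟩
  have hopen : ∀ x : X, IsOpen {y | d x y < δ x / 2} := by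
    intro x
    exact TopologicalSpace.GenerateOpen.basic _ ⟨x, δ x / 2, half_pos (hδpos x), rfl⟩
  obtain ⟨t, ht⟩ := isCompact_univ.elim_finite_subcover _ hopen hcov
  by_cases hne : Nonempty X
  · obtain ⟨x₀⟩ := hne
    have htne : t.Nonempty := by
      rcases Set.mem_iUnion₂.1 (ht (Set.mem_univ x₀)) with ⟨i, hi, _⟩
      exact ⟨i, hi⟩
    refine ⟨t.inf' htne (fun i => δ i / 2), ?_, ?_⟩
    · exact (Finset.lt_inf'_iff htne).2 fun i _ => half_pos (hδpos i)
    · intro x y hxy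
      rcases Set.mem_iUnion₂.1 (ht (Set.mem_univ x)) with ⟨i, hit, hix⟩
      simp only [Set.mem_setOf_eq] at hix
      have hδ₀ : t.inf' htne (fun i => δ i / 2) ≤ δ i / 2 :=
        Finset.inf'_le _ hit
      have hiy : d i y < δ i := by
        have := hd.triangle i y x
        linarith
      have h1 := hδ i x (by linarith [hδpos i])
      have h2 := hδ i y hiy
      have h1' := abs_lt.1 h1
      have h2' := abs_lt.1 h2
      rw [abs_lt]
      constructor <;> linarith [h1'.1, h1'.2, h2'.1, h2'.2]
  · exact ⟨1, one_pos, fun x _ _ => absurd ⟨x⟩ hne⟩
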